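/- (Feasible range of the shift, case α > β: sufficiency) Let W be a positive integer and let x_min ≤ x_max be integers with x_max − x_min < W. Set α = x_min mod W and β = x_max mod W, and suppose α > β. Then for every integer shift c with W − α ≤ c < W − β and every integer x with x_min ≤ x ≤ x_max, one has ⌊(x + c)/W⌋ = ⌊(x_min + c)/W⌋; in particular all integers in [x_min, x_max] are merged to a common value by f_{c,W}. -/

import Mathlib

/-- The piecewise constant merge function with shift `c` and step size `W`:
`f_{c,W}(x) = ⌊(x + c)/W⌋·W + W/2 − c`. -/
noncomputable def mergeFn (c W x : ℝ) : ℝ :=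
  (⌊(x + c) / W⌋ : ℝ) * W + W / 2 - c

lemma aux_ediv_eq (W a k : ℤ) (hW : 0 < W) (h1 : W * k ≤ a) (h2 : a < W * (k + 1)) :
    a / W = k := by
  have h3 : a - W * k < W := by linarith [h2]
  have h4 : 0 ≤ a - W * k := by linarith
  have : a = (a - W * k) + k * W := by ring
  rw [this, Int.add_mul_ediv_right _ _ (ne_of_gt hW),
    Int.ediv_eq_zero_of_lt h4 h3, zero_add]

lemma aux_floor_div (a W : ℤ) (hW : 0 < W) : ⌊(a : ℝ) / (W : ℝ)⌋ = a / W := by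
  have hW' : (0 : ℝ) < (W : ℝ) := by exact_mod_cast hW
  have hdm : W * (a / W) + a % W = a := Int.mul_ediv_add_emod a W
  have hr0 : 0 ≤ a % W := Int.emod_nonneg a (ne_of_gt hW)
  have hrW : a % W < W := Int.emod_lt_of_pos a hW
  have he : (a : ℝ) / (W : ℝ) = (a / W : ℤ) + ((a % W : ℤ) : ℝ) / (W : ℝ) := by
    field_simp
    exact_mod_cast (by linarith [hdm] : (a : ℤ) = W * (a / W) + a % W)
  rw [he]
  rw [Int.floor_eq_iff]
  constructor
  · have : (0 : ℝ) ≤ ((a % W : ℤ) : ℝ) / (W : ℝ) :=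
      div_nonneg (by exact_mod_cast hr0) hW'.le
    linarith
  · have : ((a % W : ℤ) : ℝ) / (W : ℝ) < 1 := by
      rw [div_lt_one hW']; exact_mod_cast hrW
    linarith

/-- **Feasible range of the shift, case α > β: sufficiency.** If
`xmax − xmin < W`, `α = xmin % W > β = xmax % W`, then every integer shift
`c` with `W − α ≤ c < W − β` merges every integer `x ∈ [xmin, xmax]` to the
same interval as `xmin`, and hence `f_{c,W}` maps all such `x` to a common
value. -/
theorem feasible_shift_gt_sufficiency (W : ℤ) (hW : 0 < W)
    (xmin xmax : ℤ) (hle : xmin ≤ xmax) (hdiff : xmax - xmin < W)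
    (α β : ℤ) (hα : α = xmin % W) (hβ : β = xmax % W) (hαβ : α > β)
    (c : ℤ) (hc1 : W - α ≤ c) (hc2 : c < W - β)
    (x : ℤ) (hx1 : xmin ≤ x) (hx2 : x ≤ xmax) :
    (x + c) / W = (xmin + c) / W ∧
      mergeFn (c : ℝ) (W : ℝ) (x : ℝ) = mergeFn (c : ℝ) (W : ℝ) (xmin : ℝ) := by
  set q := xmin / W with hq
  have hmin : xmin = W * q + α := by rw [hα, hq]; exact (Int.mul_ediv_add_emod xmin W).symm
  set q' := xmax / W with hq'
  have hmax : xmax = W * q' + β := by rw [hβ, hq']; exact (Int.mul_ediv_add_emod xmax W).symm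
  have hβ0 : 0 ≤ β := hβ ▸ Int.emod_nonneg xmax (ne_of_gt hW)
  have hαW : α < W := hα ▸ Int.emod_lt_of_pos xmin hW
  have hq1 : q' = q + 1 := by
    have h1 : 0 < W * (q' - q) := by nlinarith [hle, hmin, hmax]
    have h2 : W * (q' - q) < 2 * W := by nlinarith
    have l1 : 0 < q' - q := by by_contra h; push_neg at h; nlinarith
    have l2 : q' - q < 2 := by by_contra h; push_neg at h; nlinarith
    omega
  -- key bounds
  have key : ∀ y : ℤ, xmin ≤ y → y ≤ xmax → (y + c) / W = q + 1 := by
    intro y hy1 hy2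
    apply aux_ediv_eq W _ _ hW
    · nlinarith
    · nlinarith
  have h1 := key x hx1 hx2
  have h2 := key xmin le_rfl hle
  refine ⟨h1.trans h2.symm, ?_⟩
  unfold mergeFn
  have e1 : ((x : ℝ) + (c : ℝ)) / (W : ℝ) = (((x + c : ℤ) : ℝ)) / (W : ℝ) := by push_cast; ring
  have e2 : ((xmin : ℝ) + (c : ℝ)) / (W : ℝ) = (((xmin + c : ℤ) : ℝ)) / (W : ℝ) := by
    push_cast; ring
  rw [e1, e2, aux_floor_div _ _ hW, aux_floor_div _ _ hW, h1, h2]
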